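/- Let G be a simple graph on a finite vertex set V, let θ > 0, let k ≥ 2, and let λ > 0 satisfy (k−1)·exp(−θλ) < 1/4. Set q = exp(−θλ) and r = exp(−2θλ). For a subset S ⊆ V of cardinality k, let Z_S be the k×k matrix indexed by S with (Z_S)_{uu} = 1, (Z_S)_{uv} = q if u ≠ v are adjacent in G, and (Z_S)_{uv} = r if u ≠ v are not adjacent. Then Z_S is invertible; if S is an independent set of G then 𝟙ᵀ Z_S⁻¹ 𝟙 = k/(1 + (k−1)·r); and if S contains at least one edge of G then 𝟙ᵀ Z_S⁻¹ 𝟙 < k/(1 + (k−1)·r). -/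

import Mathlib

set_option maxHeartbeats 1000000 in
theorem stmt_10 {V : Type*} [Fintype V] [DecidableEq V]
    (G : SimpleGraph V) [DecidableRel G.Adj]
    (θ : ℝ) (hθ : 0 < θ) (k : ℕ) (hk : 2 ≤ k)
    (lam : ℝ) (hlam : 0 < lam)
    (hsmall : ((k : ℝ) - 1) * Real.exp (-θ * lam) < 1 / 4)
    (q r : ℝ) (hq : q = Real.exp (-θ * lam)) (hr : r = Real.exp (-(2 * θ) * lam))
    (S : Finset V) (hS : S.card = k)
    (Z : Matrix ↥S ↥S ℝ)
    (hZ : Z = Matrix.of fun (u v : ↥S) =>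
      if (u : V) = (v : V) then (1 : ℝ)
      else if G.Adj (u : V) (v : V) then q else r) :
    IsUnit Z.det ∧
    ((∀ u ∈ S, ∀ v ∈ S, ¬ G.Adj u v) →
      ∑ u, ∑ v, Z⁻¹ u v = (k : ℝ) / (1 + ((k : ℝ) - 1) * r)) ∧
    ((∃ u ∈ S, ∃ v ∈ S, G.Adj u v) →
      ∑ u, ∑ v, Z⁻¹ u v < (k : ℝ) / (1 + ((k : ℝ) - 1) * r)) := by
  have hq0 : 0 < q := hq ▸ Real.exp_pos _
  have hr0 : 0 < r := hr ▸ Real.exp_pos _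
  have htl : 0 < θ * lam := mul_pos hθ hlam
  have hrq : r < q := by
    rw [hq, hr]; exact Real.exp_lt_exp.2 (by nlinarith)
  have hr1 : r < 1 := by
    rw [hr]; apply Real.exp_lt_one_iff.2; nlinarith
  have hkR : (2 : ℝ) ≤ (k : ℝ) := by exact_mod_cast hk
  have hkq : ((k : ℝ) - 1) * q < 1 / 4 := hq ▸ hsmall
  have hd : 0 < 1 + ((k : ℝ) - 1) * r := by nlinarith
  have hcardS : Fintype.card ↥S = k := by rw [Fintype.card_coe, hS]
  have hne : Nonempty ↥S := by
    rw [← Fintype.card_pos_iff, hcardS]; omega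
  have hZdiag : ∀ u : ↥S, Z u u = 1 := by
    intro u; rw [hZ]; simp
  have hZle : ∀ u v : ↥S, u ≠ v → |Z u v| ≤ q := by
    intro u v huv
    have hcv : (u : V) ≠ (v : V) := Subtype.coe_injective.ne huv
    rw [hZ]
    simp only [Matrix.of_apply, if_neg hcv]
    split_ifs
    · rw [abs_of_pos hq0]
    · rw [abs_of_pos hr0]; exact hrq.le
  have hcard_erase : ∀ u : ↥S,
      ((Finset.univ.erase u).card : ℝ) = (k : ℝ) - 1 := by
    intro u
    rw [Finset.card_erase_of_mem (Finset.mem_univ u), Finset.card_univ, hcardS]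
    have : 1 ≤ k := by omega
    push_cast [this]
    ring
  -- bound on the off-diagonal part of a row of Z applied to a vector
  have hbound : ∀ (x : ↥S → ℝ) (M : ℝ) (u : ↥S), (∀ v, |x v| ≤ M) →
      |∑ v ∈ Finset.univ.erase u, Z u v * x v| ≤ ((k : ℝ) - 1) * q * M := by
    intro x M u hx
    have hM0 : 0 ≤ M := le_trans (abs_nonneg _) (hx u)
    calc |∑ v ∈ Finset.univ.erase u, Z u v * x v|
        ≤ ∑ v ∈ Finset.univ.erase u, |Z u v * x v| :=
          Finset.abs_sum_le_sum_abs _ _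
      _ ≤ ∑ _v ∈ Finset.univ.erase u, q * M := by
          apply Finset.sum_le_sum
          intro v hv
          rw [abs_mul]
          exact mul_le_mul (hZle u v (Finset.ne_of_mem_erase hv).symm) (hx v)
            (abs_nonneg _) hq0.le
      _ = ((k : ℝ) - 1) * q * M := by
          rw [Finset.sum_const, nsmul_eq_mul, hcard_erase u]; ring
  have hrow : ∀ (x : ↥S → ℝ) (u : ↥S),
      Z.mulVec x u = x u + ∑ v ∈ Finset.univ.erase u, Z u v * x v := by
    intro x u
    rw [Matrix.mulVec, dotProduct,
      ← Finset.add_sum_erase Finset.univ _ (Finset.mem_univ u), hZdiag u, one_mul]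
  -- injectivity of Z
  have hinj : ∀ x : ↥S → ℝ, Z.mulVec x = 0 → x = 0 := by
    intro x hx
    by_contra hx0
    obtain ⟨u, -, hu⟩ := Finset.exists_max_image Finset.univ (fun v => |x v|)
      Finset.univ_nonempty
    have hu' : ∀ v, |x v| ≤ |x u| := fun v => hu v (Finset.mem_univ v)
    have hupos : 0 < |x u| := by
      obtain ⟨w, hw⟩ := Function.ne_iff.1 hx0
      exact lt_of_lt_of_le (abs_pos.2 hw) (hu' w)
    have h0 : x u + ∑ v ∈ Finset.univ.erase u, Z u v * x v = 0 := by
      rw [← hrow]; rw [hx]; rfl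
    have h1 : |x u| ≤ ((k : ℝ) - 1) * q * |x u| := by
      have hb := hbound x |x u| u hu'
      have : |x u| = |∑ v ∈ Finset.univ.erase u, Z u v * x v| := by
        rw [show x u = -∑ v ∈ Finset.univ.erase u, Z u v * x v from by linarith,
          abs_neg]
      linarith
    nlinarith
  have hdet : IsUnit Z.det := by
    refine isUnit_iff_ne_zero.2 fun h => ?_
    obtain ⟨v, hv, hv0⟩ := Matrix.exists_mulVec_eq_zero_iff.2 h
    exact hv (hinj v hv0)
  set f : ↥S → ℝ := Z⁻¹.mulVec (fun _ => 1) with hf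
  have hZf : Z.mulVec f = fun _ => 1 := by
    rw [hf, Matrix.mulVec_mulVec, Matrix.mul_nonsing_inv _ hdet, Matrix.one_mulVec]
  have hsum : ∑ u, ∑ v, Z⁻¹ u v = ∑ u, f u := by
    apply Finset.sum_congr rfl
    intro u _
    rw [hf, Matrix.mulVec, dotProduct]
    simp
  refine ⟨hdet, ?_, ?_⟩
  · -- independent case
    intro hind
    set c : ℝ := 1 / (1 + ((k : ℝ) - 1) * r) with hc
    have hZc : Z.mulVec (fun _ => c) = fun _ => 1 := by
      funext u
      rw [hrow]
      have hterm : ∀ v ∈ Finset.univ.erase u, Z u v * c = r * c := by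
        intro v hv
        have hcv : (u : V) ≠ (v : V) :=
          Subtype.coe_injective.ne (Finset.ne_of_mem_erase hv).symm
        have hnadj : ¬ G.Adj (u : V) (v : V) := hind _ u.2 _ v.2
        rw [hZ]
        simp [hcv, hnadj]
        intro h; exact absurd (congrArg Subtype.val h) hcv
      rw [Finset.sum_congr rfl hterm, Finset.sum_const, nsmul_eq_mul, hcard_erase u]
      rw [hc]
      field_simp
    have hfc : f = fun _ => c := by
      have h0 := hinj (f - fun _ => c) (by rw [Matrix.mulVec_sub, hZf, hZc, sub_self])
      funext u
      have := congrFun h0 u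
      simpa [sub_eq_zero] using this
    rw [hsum, hfc, Finset.sum_const, Finset.card_univ, hcardS, nsmul_eq_mul, hc,
      mul_one_div]
  · -- edge case
    rintro ⟨u₀, hu₀, v₀, hv₀, hadj⟩
    -- positivity of f
    obtain ⟨u₁, -, hu₁⟩ := Finset.exists_max_image Finset.univ (fun v => |f v|)
      Finset.univ_nonempty
    have hu₁' : ∀ v, |f v| ≤ |f u₁| := fun v => hu₁ v (Finset.mem_univ v)
    have hfe : ∀ u, f u = 1 - ∑ v ∈ Finset.univ.erase u, Z u v * f v := by
      intro u
      have h1 : Z.mulVec f u = 1 := by rw [hZf]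
      rw [hrow] at h1
      linarith
    have hM43 : |f u₁| ≤ 4 / 3 := by
      have h1 := hbound f |f u₁| u₁ hu₁'
      have h2 : |f u₁| ≤ 1 + ((k : ℝ) - 1) * q * |f u₁| := by
        calc |f u₁| = |1 - ∑ v ∈ Finset.univ.erase u₁, Z u₁ v * f v| := by
              rw [← hfe]
          _ ≤ |(1:ℝ)| + |∑ v ∈ Finset.univ.erase u₁, Z u₁ v * f v| := abs_sub _ _
          _ ≤ 1 + ((k : ℝ) - 1) * q * |f u₁| := by rw [abs_one]; linarith
      nlinarith [abs_nonneg (f u₁)]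
    have hfpos : ∀ u, 0 < f u := by
      intro u
      have h1 := hbound f |f u₁| u₁ hu₁'
      have h2 := hbound f |f u₁| u hu₁'
      have h3 : |∑ v ∈ Finset.univ.erase u, Z u v * f v| ≤ 1 / 3 := by
        calc |∑ v ∈ Finset.univ.erase u, Z u v * f v| ≤ ((k : ℝ) - 1) * q * |f u₁| :=
            h2
          _ ≤ 1 / 3 := by nlinarith [abs_nonneg (f u₁)]
      have := abs_le.1 h3
      rw [hfe u]
      linarith
    -- quadratic form decomposition
    set s : ℝ := ∑ u, f u with hs
    set p : ℝ := ∑ u, f u ^ 2 with hp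
    have hspos : 0 < s := Finset.sum_pos (fun u _ => hfpos u) Finset.univ_nonempty
    have hpt : ∀ u v : ↥S, f u * (Z u v * f v) =
        r * (f u * f v) + (if u = v then (1 - r) * (f u * f v) else 0) +
          (if G.Adj (u : V) (v : V) then (q - r) * (f u * f v) else 0) := by
      intro u v
      rw [hZ]
      simp only [Matrix.of_apply]
      by_cases h1 : (u : V) = (v : V)
      · have h2 : u = v := Subtype.ext h1
        have h3 : ¬ G.Adj (u : V) (v : V) := by rw [h1]; exact G.irrefl
        rw [if_pos h1, if_pos h2, if_neg h3]
        ring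
      · have h2 : ¬ u = v := fun h => h1 (congrArg _ h)
        rw [if_neg h1, if_neg h2]
        by_cases h3 : G.Adj (u : V) (v : V)
        · rw [if_pos h3, if_pos h3]; ring
        · rw [if_neg h3, if_neg h3]; ring
    set T : ℝ := ∑ u : ↥S, ∑ v : ↥S,
      (if G.Adj (u : V) (v : V) then (q - r) * (f u * f v) else 0) with hT
    have hTpos : 0 < T := by
      rw [hT]
      apply Finset.sum_pos'
      · intro u _
        apply Finset.sum_nonneg
        intro v _
        split_ifs
        · have := mul_pos (hfpos u) (hfpos v)
          nlinarith
        · exact le_rfl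
      · refine ⟨⟨u₀, hu₀⟩, Finset.mem_univ _, ?_⟩
        apply Finset.sum_pos'
        · intro v _
          split_ifs
          · have := mul_pos (hfpos ⟨u₀, hu₀⟩) (hfpos v)
            nlinarith
          · exact le_rfl
        · refine ⟨⟨v₀, hv₀⟩, Finset.mem_univ _, ?_⟩
          rw [if_pos hadj]
          have := mul_pos (hfpos ⟨u₀, hu₀⟩) (hfpos ⟨v₀, hv₀⟩)
          nlinarith
    have hident : s = r * (s * s) + (1 - r) * p + T := by
      have e0 : s = ∑ u : ↥S, ∑ v : ↥S, f u * (Z u v * f v) := by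
        rw [hs]
        refine Finset.sum_congr rfl fun u _ => ?_
        have h1 : Z.mulVec f u = 1 := by rw [hZf]
        rw [Matrix.mulVec, dotProduct] at h1
        calc f u = f u * ∑ v : ↥S, Z u v * f v := by rw [h1, mul_one]
          _ = ∑ v : ↥S, f u * (Z u v * f v) := Finset.mul_sum _ _ _
      have e2 : ∑ u : ↥S, ∑ v : ↥S, r * (f u * f v) = r * (s * s) := by
        rw [hs, Finset.sum_mul_sum, Finset.mul_sum]
        exact Finset.sum_congr rfl fun u _ => by rw [Finset.mul_sum]
      have e3 : ∑ u : ↥S, ∑ v : ↥S,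
          (if u = v then (1 - r) * (f u * f v) else 0) = (1 - r) * p := by
        rw [hp, Finset.mul_sum]
        refine Finset.sum_congr rfl fun u _ => ?_
        rw [Finset.sum_ite_eq Finset.univ u (fun v => (1 - r) * (f u * f v))]
        simp [sq]
      calc s = ∑ u : ↥S, ∑ v : ↥S, f u * (Z u v * f v) := e0
        _ = ∑ u : ↥S, ∑ v : ↥S, (r * (f u * f v) +
              (if u = v then (1 - r) * (f u * f v) else 0) +
              (if G.Adj (u : V) (v : V) then (q - r) * (f u * f v) else 0)) :=
            Finset.sum_congr rfl fun u _ => Finset.sum_congr rfl fun v _ => hpt u v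
        _ = (∑ u : ↥S, ∑ v : ↥S, r * (f u * f v)) +
              (∑ u : ↥S, ∑ v : ↥S, (if u = v then (1 - r) * (f u * f v) else 0)) +
              (∑ u : ↥S, ∑ v : ↥S,
                (if G.Adj (u : V) (v : V) then (q - r) * (f u * f v) else 0)) := by
            simp only [Finset.sum_add_distrib]
        _ = r * (s * s) + (1 - r) * p + T := by rw [e2, e3, hT]
    have hcs : s ^ 2 ≤ (k : ℝ) * p := by
      have h1 := sq_sum_le_card_mul_sum_sq (s := Finset.univ) (f := f)
      rw [Finset.card_univ, hcardS] at h1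
      rw [hs, hp]
      exact_mod_cast h1
    rw [hsum, lt_div_iff₀ hd]
    have hidk : (k : ℝ) * s = (k : ℝ) * (r * (s * s)) + (k : ℝ) * ((1 - r) * p) +
        (k : ℝ) * T := by rw [← mul_add, ← mul_add, ← hident]
    have hkT : 0 < (k : ℝ) * T := mul_pos (by positivity) hTpos
    have h2 : (1 - r) * s ^ 2 ≤ (1 - r) * ((k : ℝ) * p) :=
      mul_le_mul_of_nonneg_left hcs (by linarith)
    have hks : (∑ u, f u) * (1 + ((k : ℝ) - 1) * r) * s < (k : ℝ) * s := by
      rw [← hs]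
      nlinarith [hidk, hkT, h2]
    exact lt_of_mul_lt_mul_right hks hspos.le
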